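/- arXiv:1101.3140 — 3 statements merged into one kernel-verified Lean document; each statement's English description precedes it below -/
import Mathlib

section
/- Assume ζ = 0 and let supp 𝒟₀ denote the set of exponents α ∈ ℕⁿ such that the monomial d^α appears with a nonzero coefficient in some element of 𝒟₀. Then supp 𝒟₀ = {α ∈ ℕⁿ : x^α ∉ Q₀}; in particular, supp 𝒟₀ is finite (all its elements have degree at most the nilindex N of Q₀), and a monomial basis of R/Q₀ can be chosen among the monomials {x^α : α ∈ supp 𝒟₀}. -/
open MvPolynomial

/-- Total degree of a multi-exponent. -/
def multideg {n : ℕ} (α : Fin n →₀ ℕ) : ℕ := α.sum fun _ k => k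

/-- Normalized derivative `d^α g = (1/α!) ∂^α g` as a polynomial. -/
noncomputable def nderiv {n : ℕ} (α : Fin n →₀ ℕ) (g : MvPolynomial (Fin n) ℝ) :
    MvPolynomial (Fin n) ℝ :=
  ∑ γ ∈ g.support,
    monomial (γ - α) (((∏ i, (γ i).choose (α i) : ℕ) : ℝ) * coeff γ g)

/-- `Λ(∂_x)[g]`: apply the differential operator with coefficients `Λ`
(in the normalized basis `d^α`), keeping a polynomial result. -/
noncomputable def applyPoly {n : ℕ} (Λ : (Fin n →₀ ℕ) →₀ ℝ)
    (g : MvPolynomial (Fin n) ℝ) : MvPolynomial (Fin n) ℝ :=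
  Λ.sum fun α c => c • nderiv α g

/-- `Λ ↦ Λ^ζ[g]`, as a linear map in `Λ`. -/
noncomputable def applyAtL {n : ℕ} (ζ : Fin n → ℝ) (g : MvPolynomial (Fin n) ℝ) :
    ((Fin n →₀ ℕ) →₀ ℝ) →ₗ[ℝ] ℝ :=
  Finsupp.linearCombination ℝ (fun α => eval ζ (nderiv α g))

/-- `Λ^ζ[g]`. -/
noncomputable def applyAt {n : ℕ} (ζ : Fin n → ℝ) (Λ : (Fin n →₀ ℕ) →₀ ℝ)
    (g : MvPolynomial (Fin n) ℝ) : ℝ := applyAtL ζ g Λ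

/-- The orthogonal (dual space) of an ideal at ζ. -/
noncomputable def dualSpace {n : ℕ} (ζ : Fin n → ℝ)
    (Q : Ideal (MvPolynomial (Fin n) ℝ)) : Submodule ℝ ((Fin n →₀ ℕ) →₀ ℝ) :=
  ⨅ p ∈ Q, LinearMap.ker (applyAtL ζ p)

/-- The maximal ideal at ζ. -/
noncomputable def maxIdealAt {n : ℕ} (ζ : Fin n → ℝ) : Ideal (MvPolynomial (Fin n) ℝ) :=
  Ideal.span (Set.range fun i => X i - C (ζ i))

/-- `Q` is the primary component of `I` at an isolated root `ζ`. -/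
def IsPrimaryComponentAt {n : ℕ} (ζ : Fin n → ℝ)
    (I Q : Ideal (MvPolynomial (Fin n) ℝ)) : Prop :=
  Q.IsPrimary ∧ Q.radical = maxIdealAt ζ ∧
    ∃ S : Finset (Ideal (MvPolynomial (Fin n) ℝ)),
      (∀ P ∈ S, P.IsPrimary ∧ ¬ P.radical ≤ maxIdealAt ζ) ∧ I = S.inf id ⊓ Q

/-- Elements of the dual space of degree at most `t`. -/
noncomputable def dualSpaceLE {n : ℕ} (ζ : Fin n → ℝ)
    (Q : Ideal (MvPolynomial (Fin n) ℝ)) (t : ℕ) :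
    Submodule ℝ ((Fin n →₀ ℕ) →₀ ℝ) :=
  dualSpace ζ Q ⊓ Finsupp.supported ℝ ℝ {α | multideg α ≤ t}

/-- The derivation `∂/∂∂_i` in the normalized coordinates: shift of coefficients. -/
noncomputable def dshift {n : ℕ} (i : Fin n) (Λ : (Fin n →₀ ℕ) →₀ ℝ) :
    (Fin n →₀ ℕ) →₀ ℝ :=
  Finsupp.comapDomain (fun β => β + Finsupp.single i 1) Λ
    (fun _ _ _ _ h => add_right_cancel h)

/-- Truncation: set `∂_j = 0` for `j > k`. -/
noncomputable def trunck {n : ℕ} (k : Fin n) (Λ : (Fin n →₀ ℕ) →₀ ℝ) :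
    (Fin n →₀ ℕ) →₀ ℝ :=
  Λ.filter (fun α => ∀ j, k < j → α j = 0)

/-- Integration with respect to `∂_k` in the normalized coordinates. -/
noncomputable def intk {n : ℕ} (k : Fin n) (Λ : (Fin n →₀ ℕ) →₀ ℝ) :
    (Fin n →₀ ℕ) →₀ ℝ :=
  Finsupp.mapDomain (fun α => α + Finsupp.single k 1) Λ

/-- `supp 𝒟₀`: the set of exponents `α` such that `d^α` appears with a nonzero
coefficient in some element of the dual space at `0`. -/
def dsupp {n : ℕ} (Q : Ideal (MvPolynomial (Fin n) ℝ)) : Set (Fin n →₀ ℕ) :=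
  {α | ∃ Λ ∈ dualSpace (0 : Fin n → ℝ) Q, Λ α ≠ 0}

-- lemmas start here
section Lemmas
variable {n : ℕ}

lemma eval_zero_monomial (s : Fin n →₀ ℕ) (a : ℝ) :
    eval (0 : Fin n → ℝ) (monomial s a) = if s = 0 then a else 0 := by
  rw [eval_monomial]
  by_cases hs : s = 0
  · simp [hs]
  · rw [if_neg hs]
    obtain ⟨i, hi⟩ : ∃ i, s i ≠ 0 := by
      by_contra h; push_neg at h; exact hs (Finsupp.ext h)
    have hmem : i ∈ s.support := Finsupp.mem_support_iff.2 hi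
    rw [Finsupp.prod, Finset.prod_eq_zero hmem (by simp [zero_pow hi]), mul_zero]

lemma eval_zero_nderiv (α : Fin n →₀ ℕ) (g : MvPolynomial (Fin n) ℝ) :
    eval (0 : Fin n → ℝ) (nderiv α g) = coeff α g := by
  classical
  rw [nderiv, map_sum]
  have key : ∀ γ ∈ g.support,
      eval (0 : Fin n → ℝ) (monomial (γ - α)
        (((∏ i, (γ i).choose (α i) : ℕ) : ℝ) * coeff γ g))
        = if γ = α then coeff α g else 0 := by
    intro γ _
    rw [eval_zero_monomial]
    by_cases h : γ = α
    · subst h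
      simp [tsub_self]
    · rw [if_neg h]
      by_cases h2 : γ - α = 0
      · rw [if_pos h2]
        have hle : γ ≤ α := tsub_eq_zero_iff_le.1 h2
        have hex : ∃ i, γ i < α i := by
          by_contra hcon
          push_neg at hcon
          exact h (le_antisymm hle (Finsupp.le_def.2 hcon))
        obtain ⟨i, hi⟩ := hex
        rw [Finset.prod_eq_zero (Finset.mem_univ i) (Nat.choose_eq_zero_of_lt hi)]
        simp
      · rw [if_neg h2]
  rw [Finset.sum_congr rfl key, Finset.sum_ite_eq' g.support α (fun _ => coeff α g)]
  split_ifs with h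
  · rfl
  · exact (MvPolynomial.notMem_support_iff.1 h).symm

lemma applyAtL_zero_apply (g : MvPolynomial (Fin n) ℝ) (Λ : (Fin n →₀ ℕ) →₀ ℝ) :
    applyAtL (0 : Fin n → ℝ) g Λ = Λ.sum fun β c => c * coeff β g := by
  rw [applyAtL, Finsupp.linearCombination_apply]
  exact Finsupp.sum_congr fun β _ => by rw [eval_zero_nderiv, smul_eq_mul]

lemma mem_dualSpace_iff {ζ : Fin n → ℝ} {Q : Ideal (MvPolynomial (Fin n) ℝ)}
    {Λ : (Fin n →₀ ℕ) →₀ ℝ} :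
    Λ ∈ dualSpace ζ Q ↔ ∀ p ∈ Q, applyAtL ζ p Λ = 0 := by
  simp [dualSpace, Submodule.mem_iInf, LinearMap.mem_ker]

lemma applyAtL_monomial (α : Fin n →₀ ℕ) (Λ : (Fin n →₀ ℕ) →₀ ℝ) :
    applyAtL (0 : Fin n → ℝ) (monomial α (1 : ℝ)) Λ = Λ α := by
  classical
  rw [applyAtL_zero_apply, Finsupp.sum]
  have key : ∀ β ∈ Λ.support, Λ β * coeff β (monomial α (1 : ℝ))
      = if β = α then Λ α else 0 := by
    intro β _
    rw [coeff_monomial]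
    rcases eq_or_ne β α with h | h
    · subst h; simp
    · rw [if_neg (fun hh => h hh.symm), mul_zero, if_neg h]
  rw [Finset.sum_congr rfl key, Finset.sum_ite_eq' Λ.support α (fun _ => Λ α)]
  split_ifs with h
  · rfl
  · exact (Finsupp.notMem_support_iff.1 h).symm

lemma X_mem_maxIdealAt (i : Fin n) :
    (X i : MvPolynomial (Fin n) ℝ) ∈ maxIdealAt (0 : Fin n → ℝ) :=
  Ideal.subset_span ⟨i, by simp⟩

lemma monomial_mem_pow (α : Fin n →₀ ℕ) :
    (monomial α (1 : ℝ)) ∈ (maxIdealAt (0 : Fin n → ℝ)) ^ (multideg α) := by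
  classical
  rw [monomial_eq]
  simp only [map_one, one_mul]
  rw [Finsupp.prod, multideg, Finsupp.sum]
  induction α.support using Finset.induction with
  | empty => simp [Ideal.one_eq_top]
  | insert _ _ h ih =>
      rw [Finset.prod_insert h, Finset.sum_insert h, pow_add]
      exact Ideal.mul_mem_mul (Ideal.pow_mem_pow (X_mem_maxIdealAt _) _) ih

lemma finite_multideg_le (N : ℕ) : {α : Fin n →₀ ℕ | multideg α ≤ N}.Finite := by
  have h1 : (Set.pi Set.univ fun _ : Fin n => Set.Iic N).Finite :=
    Set.Finite.pi fun _ => Set.finite_Iic N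
  have h2 : Set.InjOn (fun α : Fin n →₀ ℕ => (α : Fin n → ℕ)) {α | multideg α ≤ N} :=
    fun a _ b _ h => DFunLike.coe_injective h
  apply Set.Finite.of_finite_image _ h2
  apply h1.subset
  rintro _ ⟨α, hα, rfl⟩ i _
  have hle : α i ≤ multideg α := by
    by_cases hi : i ∈ α.support
    · exact Finset.single_le_sum (fun _ _ => Nat.zero_le _) hi
    · simp [Finsupp.notMem_support_iff.1 hi]
  exact le_trans hle hα

end Lemmas

section Lemmas2
variable {n : ℕ}

lemma mk_smul' (Q : Ideal (MvPolynomial (Fin n) ℝ)) (c : ℝ) (q : MvPolynomial (Fin n) ℝ) :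
    Ideal.Quotient.mk Q (c • q) = c • Ideal.Quotient.mk Q q := by
  rw [← Ideal.Quotient.mkₐ_eq_mk ℝ Q]
  exact map_smul _ c q

lemma monomial_smul_one (β : Fin n →₀ ℕ) (c : ℝ) :
    (monomial β c : MvPolynomial (Fin n) ℝ) = c • monomial β (1 : ℝ) := by
  rw [MvPolynomial.smul_monomial, smul_eq_mul, mul_one]

lemma dsupp_eq {Q : Ideal (MvPolynomial (Fin n) ℝ)} {N : ℕ}
    (hN' : (maxIdealAt (0 : Fin n → ℝ)) ^ (N + 1) ≤ Q) :
    dsupp Q = {α | monomial α (1 : ℝ) ∉ Q} := by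
  classical
  ext α
  constructor
  · rintro ⟨Λ, hΛ, hα⟩ hmem
    exact hα (by rw [← applyAtL_monomial α Λ]; exact mem_dualSpace_iff.1 hΛ _ hmem)
  · intro hα
    have hne : Ideal.Quotient.mk Q (monomial α (1 : ℝ)) ≠ 0 := by
      rw [Ne, Ideal.Quotient.eq_zero_iff_mem]; exact hα
    haveI : Module.Free ℝ (MvPolynomial (Fin n) ℝ ⧸ Q) :=
      Module.Free.of_divisionRing ℝ _
    haveI : Module.Projective ℝ (MvPolynomial (Fin n) ℝ ⧸ Q) :=
      Module.Projective.of_free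
    obtain ⟨φ, hφ⟩ := not_forall.1
      ((not_iff_not.2 (Module.forall_dual_apply_eq_zero_iff ℝ
        (Ideal.Quotient.mk Q (monomial α (1 : ℝ))))).2 hne)
    set G : MvPolynomial (Fin n) ℝ →ₗ[ℝ] ℝ :=
      φ ∘ₗ (Ideal.Quotient.mkₐ ℝ Q).toLinearMap with hG
    have hGmk : ∀ q, G q = φ (Ideal.Quotient.mk Q q) := by
      intro q; simp [hG, Ideal.Quotient.mkₐ_eq_mk]
    have hGQ : ∀ p ∈ Q, G p = 0 := by
      intro p hp
      rw [hGmk, Ideal.Quotient.eq_zero_iff_mem.2 hp, map_zero]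
    set F : (Fin n →₀ ℕ) → ℝ := fun β => G (monomial β (1 : ℝ)) with hF
    have hFz : ∀ β : Fin n →₀ ℕ, N < multideg β → F β = 0 := by
      intro β hβ
      exact hGQ _ (hN' (Ideal.pow_le_pow_right (by omega) (monomial_mem_pow β)))
    set Λ : (Fin n →₀ ℕ) →₀ ℝ := Finsupp.onFinset (finite_multideg_le N).toFinset F
      (fun β hβ => by
        rw [Set.Finite.mem_toFinset]
        by_contra hcon
        exact hβ (hFz β (by simpa using hcon))) with hΛdef
    have hΛap : ∀ β, Λ β = F β := fun β => rfl
    refine ⟨Λ, mem_dualSpace_iff.2 ?_, ?_⟩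
    · intro p hp
      rw [applyAtL_zero_apply, Finsupp.sum]
      have step1 : ∑ β ∈ Λ.support, Λ β * coeff β p
          = ∑ β ∈ Λ.support ∪ p.support, Λ β * coeff β p :=
        Finset.sum_subset Finset.subset_union_left (fun β _ hβ => by
          rw [Finsupp.notMem_support_iff.1 hβ, zero_mul])
      have step2 : ∑ β ∈ p.support, Λ β * coeff β p
          = ∑ β ∈ Λ.support ∪ p.support, Λ β * coeff β p :=
        Finset.sum_subset Finset.subset_union_right (fun β _ hβ => by
          rw [MvPolynomial.notMem_support_iff.1 hβ, mul_zero])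
      rw [step1, ← step2]
      have hGp : ∑ β ∈ p.support, Λ β * coeff β p = G p := by
        conv_rhs => rw [← p.support_sum_monomial_coeff]
        rw [map_sum]
        refine Finset.sum_congr rfl fun β _ => ?_
        rw [monomial_smul_one, map_smul, smul_eq_mul, hΛap, hF, mul_comm]
      rw [hGp, hGQ p hp]
    · show Λ α ≠ 0
      rw [hΛap, hF]
      simpa [hGmk] using hφ

lemma span_mk_monomial_top (Q : Ideal (MvPolynomial (Fin n) ℝ)) :
    Submodule.span ℝ (Set.range fun α : Fin n →₀ ℕ =>
      Ideal.Quotient.mk Q (monomial α (1 : ℝ))) = ⊤ := by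
  rw [eq_top_iff]
  rintro x -
  obtain ⟨p, rfl⟩ := Ideal.Quotient.mk_surjective x
  rw [← p.support_sum_monomial_coeff, map_sum]
  refine Submodule.sum_mem _ fun β _ => ?_
  rw [monomial_smul_one, mk_smul']
  exact Submodule.smul_mem _ _ (Submodule.subset_span ⟨β, rfl⟩)
end Lemmas2

/-- for `ζ = 0`, `supp 𝒟₀ = {α : x^α ∉ Q₀}`; all its elements have
degree at most the nilindex `N` of `Q₀` (in particular it is finite), and a
monomial basis of `R/Q₀` can be chosen among the monomials `x^α, α ∈ supp 𝒟₀`. -/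
theorem stmt3 {n s : ℕ} (f : Fin s → MvPolynomial (Fin n) ℝ)
    (Q : Ideal (MvPolynomial (Fin n) ℝ))
    (hQ : IsPrimaryComponentAt (0 : Fin n → ℝ) (Ideal.span (Set.range f)) Q)
    (N : ℕ) (hN : ¬ (maxIdealAt (0 : Fin n → ℝ)) ^ N ≤ Q)
    (hN' : (maxIdealAt (0 : Fin n → ℝ)) ^ (N + 1) ≤ Q) :
    dsupp Q = {α | MvPolynomial.monomial α (1 : ℝ) ∉ Q} ∧
    (∀ α ∈ dsupp Q, multideg α ≤ N) ∧
    (dsupp Q).Finite ∧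
    (∃ B : Finset (Fin n →₀ ℕ), ↑B ⊆ dsupp Q ∧
      LinearIndependent ℝ (fun β : B =>
        Ideal.Quotient.mk Q (MvPolynomial.monomial (β : Fin n →₀ ℕ) (1 : ℝ))) ∧
      Submodule.span ℝ (Set.range fun β : B =>
        Ideal.Quotient.mk Q (MvPolynomial.monomial (β : Fin n →₀ ℕ) (1 : ℝ))) = ⊤) := by
  classical
  have hds : dsupp Q = {α | monomial α (1 : ℝ) ∉ Q} := dsupp_eq hN'
  have hdeg : ∀ α ∈ dsupp Q, multideg α ≤ N := by
    intro α hα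
    by_contra h
    rw [hds] at hα
    exact hα (hN' (Ideal.pow_le_pow_right (by omega) (monomial_mem_pow α)))
  have hfin : (dsupp Q).Finite := (finite_multideg_le N).subset hdeg
  refine ⟨hds, hdeg, hfin, ?_⟩
  set g : (Fin n →₀ ℕ) → MvPolynomial (Fin n) ℝ ⧸ Q :=
    fun α => Ideal.Quotient.mk Q (monomial α (1 : ℝ)) with hg
  have hspan_img : Submodule.span ℝ (g '' dsupp Q) = ⊤ := by
    rw [eq_top_iff, ← span_mk_monomial_top Q]
    apply Submodule.span_le.2
    rintro _ ⟨α, rfl⟩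
    by_cases h : α ∈ dsupp Q
    · exact Submodule.subset_span ⟨α, h, rfl⟩
    · have hQm : monomial α (1 : ℝ) ∈ Q := by
        rw [hds, Set.mem_setOf_eq, not_not] at h
        exact h
      show g α ∈ (Submodule.span ℝ (g '' dsupp Q) : Set _)
      rw [show g α = 0 from Ideal.Quotient.eq_zero_iff_mem.2 hQm]
      exact Submodule.zero_mem _
  obtain ⟨b, hbs, hbspan, hbli⟩ := exists_linearIndependent ℝ (g '' dsupp Q)
  have hbfin : b.Finite := (hfin.image g).subset hbs
  have hchoice : ∀ v ∈ b, ∃ α, α ∈ dsupp Q ∧ g α = v := fun v hv => hbs hv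
  choose c hc1 hc2 using hchoice
  haveI : Finite ↥b := hbfin.to_subtype
  set c' : b → (Fin n →₀ ℕ) := fun v => c v v.2 with hc'
  set B : Finset (Fin n →₀ ℕ) := (Set.finite_range c').toFinset with hB
  have hBcoe : (↑B : Set (Fin n →₀ ℕ)) = Set.range c' := Set.Finite.coe_toFinset _
  have hBsub : (↑B : Set (Fin n →₀ ℕ)) ⊆ dsupp Q := by
    rw [hBcoe]
    rintro _ ⟨v, rfl⟩
    exact hc1 v v.2
  have hmemrange : ∀ β : B, (β : Fin n →₀ ℕ) ∈ Set.range c' := by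
    intro β
    rw [← hBcoe]
    exact β.2
  set e : B → b := fun β => ⟨g β, by
    obtain ⟨v, hv⟩ := hmemrange β
    rw [← hv]
    exact (hc2 v v.2).symm ▸ v.2⟩ with he
  have hge : ∀ β : B, g ↑β = ↑(e β) := fun β => rfl
  have einj : Function.Injective e := by
    intro β1 β2 h
    have h' : g ↑β1 = g ↑β2 := congrArg Subtype.val h
    obtain ⟨v1, hv1⟩ := hmemrange β1
    obtain ⟨v2, hv2⟩ := hmemrange β2
    have hv : v1 = v2 := by
      apply Subtype.ext
      rw [← hc2 v1 v1.2, ← hc2 v2 v2.2]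
      show g (c' v1) = g (c' v2)
      rw [hv1, hv2]
      exact h'
    apply Subtype.ext
    rw [← hv1, ← hv2, hv]
  have hli : LinearIndependent ℝ (fun β : B => g ↑β) := by
    have heq : (fun β : B => g ↑β) = (fun v : b => (v : MvPolynomial (Fin n) ℝ ⧸ Q)) ∘ e :=
      funext fun β => hge β
    rw [heq]
    exact hbli.comp e einj
  have hrange : Set.range (fun β : B => g ↑β) = b := by
    ext v
    constructor
    · rintro ⟨β, rfl⟩
      exact (e β).2
    · intro hv
      refine ⟨⟨c' ⟨v, hv⟩, ?_⟩, ?_⟩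
      · exact (Set.Finite.mem_toFinset _).2 ⟨⟨v, hv⟩, rfl⟩
      · exact hc2 v hv
  refine ⟨B, hBsub, hli, ?_⟩
  rw [hrange, hbspan, hspan_img]
end

section
/- Assume ζ = 0, so f₁(0) = ⋯ = f_s(0) = 0, and let N be the nilindex of Q₀. A polynomial differential operator Λ = Σ_{|α| ≤ N} λ_α d^α of degree at most N satisfies Λ^0[g] = 0 for every g in the ideal ⟨f₁,…,f_s⟩ (equivalently, Λ ∈ 𝒟₀) if and only if Λ^0[x^β f_i] = 0 for all i = 1,…,s and all monomials x^β with |β| ≤ N − 1. -/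
open MvPolynomial

section Aux

namespace Stmt8Aux

open MvPolynomial

variable {n : ℕ}

lemma multideg_add (a b : Fin n →₀ ℕ) : multideg (a + b) = multideg a + multideg b :=
  Finsupp.sum_add_index' (fun _ => rfl) (fun _ _ _ => rfl)

lemma multideg_eq_zero {a : Fin n →₀ ℕ} : multideg a = 0 ↔ a = 0 :=
  Finsupp.degree_eq_zero_iff a

lemma eq_of_le_of_multideg_le {a b : Fin n →₀ ℕ} (h : a ≤ b)
    (h2 : multideg b ≤ multideg a) : b = a := by
  have hb : a + (b - a) = b := by
    ext i
    have := Finsupp.le_def.mp h i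
    simp [Nat.add_sub_cancel' this]
  have : multideg a + multideg (b - a) = multideg b := by rw [← multideg_add, hb]
  have h0 : multideg (b - a) = 0 := by omega
  rw [multideg_eq_zero] at h0
  rw [← hb, h0, add_zero]

lemma multideg_le_of_le {a b : Fin n →₀ ℕ} (h : a ≤ b) : multideg a ≤ multideg b := by
  have hb : a + (b - a) = b := by
    ext i
    have := Finsupp.le_def.mp h i
    simp [Nat.add_sub_cancel' this]
  rw [← hb, multideg_add]
  omega

lemma eval_zero_nderiv (α : Fin n →₀ ℕ) (g : MvPolynomial (Fin n) ℝ) :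
    eval (0 : Fin n → ℝ) (nderiv α g) = coeff α g := by
  classical
  unfold nderiv
  rw [map_sum]
  have : ∀ γ ∈ g.support,
      eval (0 : Fin n → ℝ) (monomial (γ - α) (((∏ i, (γ i).choose (α i) : ℕ) : ℝ) * coeff γ g))
        = if γ = α then coeff α g else 0 := by
    intro γ hγ
    rw [show (eval (0 : Fin n → ℝ)) = (constantCoeff : MvPolynomial (Fin n) ℝ →+* ℝ) from
      eval_zero, constantCoeff_monomial]
    by_cases hγα : γ = α
    · subst hγα
      simp [tsub_self]
    · simp only [hγα, if_false]
      by_cases hle : γ - α = 0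
      · rw [if_pos hle]
        have hle' : γ ≤ α := tsub_eq_zero_iff_le.mp hle
        have : ∃ i, γ i < α i := by
          by_contra hc
          push_neg at hc
          exact hγα (le_antisymm hle' (Finsupp.le_def.mpr hc))
        obtain ⟨i, hi⟩ := this
        have : (γ i).choose (α i) = 0 := Nat.choose_eq_zero_of_lt hi
        rw [Finset.prod_eq_zero (Finset.mem_univ i) this]
        simp
      · rw [if_neg hle]
  rw [Finset.sum_congr rfl this, Finset.sum_ite_eq' g.support α fun _ => coeff α g]
  split
  · rfl
  · next h => simpa using (MvPolynomial.notMem_support_iff.mp h).symm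

lemma applyAt_zero_eq (Λ : (Fin n →₀ ℕ) →₀ ℝ) (g : MvPolynomial (Fin n) ℝ) :
    applyAt (0 : Fin n → ℝ) Λ g = Λ.sum fun α c => c * coeff α g := by
  unfold applyAt applyAtL
  rw [Finsupp.linearCombination_apply]
  exact Finset.sum_congr rfl fun α hα => by simp only [eval_zero_nderiv, smul_eq_mul]

/-- `g ↦ Λ^0[g]` as a linear map in `g`. -/
noncomputable def pairL (Λ : (Fin n →₀ ℕ) →₀ ℝ) : MvPolynomial (Fin n) ℝ →ₗ[ℝ] ℝ where
  toFun g := applyAt (0 : Fin n → ℝ) Λ g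
  map_add' a b := by
    simp only [applyAt_zero_eq, coeff_add, mul_add]
    exact Finsupp.sum_add
  map_smul' c g := by
    simp only [applyAt_zero_eq, coeff_smul, smul_eq_mul, RingHom.id_apply, Finsupp.mul_sum]
    exact Finsupp.sum_congr fun α _ => by ring

lemma pairL_apply (Λ : (Fin n →₀ ℕ) →₀ ℝ) (g : MvPolynomial (Fin n) ℝ) :
    pairL Λ g = applyAt (0 : Fin n → ℝ) Λ g := rfl

lemma coeff_zero_eq (p : MvPolynomial (Fin n) ℝ) : coeff 0 p = constantCoeff p := rfl

lemma vanish_all_beta {N : ℕ} (Λ : (Fin n →₀ ℕ) →₀ ℝ)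
    (hdeg : ∀ α ∈ Λ.support, multideg α ≤ N) (f : MvPolynomial (Fin n) ℝ)
    (hf : constantCoeff f = 0)
    (hyp : ∀ β, multideg β < N → applyAt (0 : Fin n → ℝ) Λ (monomial β 1 * f) = 0) :
    ∀ β, applyAt (0 : Fin n → ℝ) Λ (monomial β 1 * f) = 0 := by
  intro β
  by_cases hβ : multideg β < N
  · exact hyp β hβ
  push_neg at hβ
  rw [applyAt_zero_eq]
  apply Finset.sum_eq_zero
  intro α hα
  simp only [coeff_monomial_mul']
  split
  · next hle =>
      have hαβ : α = β := eq_of_le_of_multideg_le hle (le_trans (hdeg α hα) hβ)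
      subst hαβ
      rw [tsub_self, coeff_zero_eq, hf]
      ring
  · rw [mul_zero]

lemma vanish_ideal {s N : ℕ} (f : Fin s → MvPolynomial (Fin n) ℝ)
    (hf0 : ∀ i, constantCoeff (f i) = 0) (Λ : (Fin n →₀ ℕ) →₀ ℝ)
    (hdeg : ∀ α ∈ Λ.support, multideg α ≤ N)
    (hyp : ∀ (i : Fin s) (β : Fin n →₀ ℕ), multideg β < N →
      applyAt (0 : Fin n → ℝ) Λ (monomial β (1 : ℝ) * f i) = 0) :
    ∀ g ∈ Ideal.span (Set.range f), applyAt (0 : Fin n → ℝ) Λ g = 0 := by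
  intro g hg
  obtain ⟨c, rfl⟩ := Ideal.mem_span_range_iff_exists_fun.mp hg
  show pairL Λ _ = 0
  rw [map_sum]
  apply Finset.sum_eq_zero
  intro i _
  have hrw : c i * f i
      = ∑ v ∈ (c i).support, coeff v (c i) • (monomial v (1 : ℝ) * f i) := by
    conv_lhs => rw [(c i).as_sum]
    rw [Finset.sum_mul]
    refine Finset.sum_congr rfl fun v _ => ?_
    rw [← smul_mul_assoc, smul_monomial, smul_eq_mul, mul_one]
  rw [hrw, map_sum]
  apply Finset.sum_eq_zero
  intro v _
  rw [map_smul]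
  have : pairL Λ (monomial v (1 : ℝ) * f i)
      = applyAt (0 : Fin n → ℝ) Λ (monomial v (1 : ℝ) * f i) := rfl
  rw [this, vanish_all_beta Λ hdeg (f i) (hf0 i) (hyp i) v, smul_zero]

lemma mem_maxIdealAt_zero_iff (p : MvPolynomial (Fin n) ℝ) :
    p ∈ maxIdealAt (0 : Fin n → ℝ) ↔ constantCoeff p = 0 := by
  have h1 : maxIdealAt (0 : Fin n → ℝ)
      = Ideal.span (X '' Set.univ : Set (MvPolynomial (Fin n) ℝ)) := by
    simp [maxIdealAt, Set.image_univ]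
  rw [h1, mem_ideal_span_X_image]
  constructor
  · intro h
    by_contra h0
    have h0' : (0 : Fin n →₀ ℕ) ∈ p.support := by
      rw [MvPolynomial.mem_support_iff, coeff_zero_eq]
      exact h0
    obtain ⟨i, _, hi⟩ := h 0 h0'
    simp at hi
  · intro h0 m hm
    have hm0 : m ≠ 0 := by
      rintro rfl
      exact (MvPolynomial.mem_support_iff.mp hm) (by rw [coeff_zero_eq, h0])
    obtain ⟨i, hi⟩ := Finsupp.ne_iff.mp hm0
    exact ⟨i, Set.mem_univ i, by simpa using hi⟩

lemma lowcoeff (r p : MvPolynomial (Fin n) ℝ) (hr : constantCoeff r = 0) :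
    ∀ (k : ℕ) (α : Fin n →₀ ℕ), multideg α < k → coeff α (r ^ k * p) = 0 := by
  intro k
  induction k with
  | zero => intro α h; omega
  | succ k ih =>
    intro α hα
    have hrw : r ^ (k + 1) * p = r * (r ^ k * p) := by ring
    rw [hrw, coeff_mul]
    apply Finset.sum_eq_zero
    rintro ⟨u, v⟩ huv
    have huv' : u + v = α := Finset.HasAntidiagonal.mem_antidiagonal.mp huv
    by_cases hu : u = 0
    · subst hu
      rw [coeff_zero_eq, hr, zero_mul]
    · have h1 : 1 ≤ multideg u := by
        rcases Nat.eq_zero_or_pos (multideg u) with h | h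
        · exact absurd (multideg_eq_zero.mp h) hu
        · omega
      have h2 : multideg v < k := by
        have := multideg_add u v
        rw [huv'] at this
        omega
      rw [ih v h2, mul_zero]

lemma exists_good_q (S : Finset (Ideal (MvPolynomial (Fin n) ℝ)))
    (h : ∀ P ∈ S, ∃ q ∈ P, constantCoeff q ≠ 0) :
    ∃ q ∈ S.inf id, constantCoeff q ≠ 0 := by
  classical
  induction S using Finset.induction_on with
  | empty => exact ⟨1, by simp, by simp⟩
  | @insert P S hPS ih =>
    obtain ⟨q1, hq1, hc1⟩ := h P (Finset.mem_insert_self P S)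
    obtain ⟨q2, hq2, hc2⟩ := ih fun P' hP' => h P' (Finset.mem_insert_of_mem hP')
    refine ⟨q1 * q2, ?_, ?_⟩
    · rw [Finset.inf_insert]
      exact Submodule.mem_inf.mpr ⟨Ideal.mul_mem_right _ _ hq1, Ideal.mul_mem_left _ _ hq2⟩
    · rw [map_mul]
      exact mul_ne_zero hc1 hc2

end Stmt8Aux

end Aux

/-- Macaulay's dialytic criterion: assume `ζ = 0`, so all `f_i`
vanish at `0`, and let `N` be the nilindex of `Q₀`. A polynomial differential
operator `Λ` of degree at most `N` vanishes on the whole ideal `⟨f₁,…,f_s⟩`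
(equivalently, `Λ ∈ 𝒟₀`) iff `Λ^0[x^β f_i] = 0` for all `i` and all monomials
`x^β` with `|β| ≤ N − 1`. -/
theorem stmt8 {n s : ℕ} (f : Fin s → MvPolynomial (Fin n) ℝ)
    (Q : Ideal (MvPolynomial (Fin n) ℝ))
    (hQ : IsPrimaryComponentAt (0 : Fin n → ℝ) (Ideal.span (Set.range f)) Q)
    (hf0 : ∀ i, MvPolynomial.eval (0 : Fin n → ℝ) (f i) = 0)
    (N : ℕ) (hN : ¬ (maxIdealAt (0 : Fin n → ℝ)) ^ N ≤ Q)
    (hN' : (maxIdealAt (0 : Fin n → ℝ)) ^ (N + 1) ≤ Q)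
    (Λ : (Fin n →₀ ℕ) →₀ ℝ) (hdeg : ∀ α ∈ Λ.support, multideg α ≤ N) :
    ((∀ g ∈ Ideal.span (Set.range f), applyAt (0 : Fin n → ℝ) Λ g = 0) ↔
      (∀ (i : Fin s) (β : Fin n →₀ ℕ), multideg β < N →
        applyAt (0 : Fin n → ℝ) Λ (MvPolynomial.monomial β (1 : ℝ) * f i) = 0)) ∧
    (Λ ∈ dualSpace (0 : Fin n → ℝ) Q ↔
      (∀ (i : Fin s) (β : Fin n →₀ ℕ), multideg β < N →
        applyAt (0 : Fin n → ℝ) Λ (MvPolynomial.monomial β (1 : ℝ) * f i) = 0)) := by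
  classical
  open Stmt8Aux in
  obtain ⟨hprim, hrad, S, hS, hI⟩ := hQ
  have hIQ : Ideal.span (Set.range f) ≤ Q := by rw [hI]; exact inf_le_right
  have hfc : ∀ i, constantCoeff (f i) = 0 := fun i => by
    have h := hf0 i
    rwa [show (MvPolynomial.eval (0 : Fin n → ℝ))
      = (constantCoeff : MvPolynomial (Fin n) ℝ →+* ℝ) from eval_zero] at h
  have hdual : Λ ∈ dualSpace (0 : Fin n → ℝ) Q ↔
      ∀ p ∈ Q, applyAt (0 : Fin n → ℝ) Λ p = 0 := by
    simp [dualSpace, Submodule.mem_iInf, LinearMap.mem_ker, applyAt]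
  have hmemI : ∀ (i : Fin s) (β : Fin n →₀ ℕ),
      monomial β (1 : ℝ) * f i ∈ Ideal.span (Set.range f) :=
    fun i β => Ideal.mul_mem_left _ _ (Ideal.subset_span ⟨i, rfl⟩)
  have core : (∀ (i : Fin s) (β : Fin n →₀ ℕ), multideg β < N →
      applyAt (0 : Fin n → ℝ) Λ (monomial β (1 : ℝ) * f i) = 0) →
      ∀ g ∈ Ideal.span (Set.range f), applyAt (0 : Fin n → ℝ) Λ g = 0 :=
    fun hyp => vanish_ideal f hfc Λ hdeg hyp
  constructor
  · constructor
    · intro h i β _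
      exact h _ (hmemI i β)
    · exact fun h => core h
  · constructor
    · intro h i β _
      exact hdual.mp h _ (hIQ (hmemI i β))
    · intro hyp
      rw [hdual]
      intro p hp
      have hvan := core hyp
      have hexq : ∀ P ∈ S, ∃ q ∈ P, constantCoeff q ≠ 0 := by
        intro P hP
        obtain ⟨hPprim, hPrad⟩ := hS P hP
        obtain ⟨x, hx, hxm⟩ := SetLike.not_le_iff_exists.mp hPrad
        obtain ⟨k, hk⟩ := Ideal.mem_radical_iff.mp hx
        refine ⟨x ^ k, hk, ?_⟩
        rw [map_pow]
        apply pow_ne_zero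
        intro h0
        exact hxm ((mem_maxIdealAt_zero_iff x).mpr h0)
      obtain ⟨q, hqS, hqc⟩ := exists_good_q S hexq
      set c := constantCoeff q with hc
      set q' := MvPolynomial.C c⁻¹ * q with hq'
      have hq'S : q' ∈ S.inf id := Ideal.mul_mem_left _ _ hqS
      have hq'p : q' * p ∈ Ideal.span (Set.range f) := by
        rw [hI]
        exact Submodule.mem_inf.mpr
          ⟨Ideal.mul_mem_right _ _ hq'S, Ideal.mul_mem_left _ _ hp⟩
      have hcq' : constantCoeff q' = 1 := by
        rw [hq', map_mul, constantCoeff_C, inv_mul_cancel₀ hqc]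
      have hc1q' : constantCoeff (1 - q') = 0 := by
        rw [map_sub, map_one, hcq', sub_self]
      set G : MvPolynomial (Fin n) ℝ := ∑ j ∈ Finset.range (N + 1), (1 - q') ^ j with hG
      have hgeom : q' * G = 1 - (1 - q') ^ (N + 1) := by
        have h := mul_geom_sum (1 - q') (N + 1)
        rw [hG]
        linear_combination -h
      have hkey : p = (q' * p) * G + (1 - q') ^ (N + 1) * p := by
        linear_combination -p * hgeom
      have e1 : applyAt (0 : Fin n → ℝ) Λ p = pairL Λ p := rfl
      rw [e1, hkey, map_add]
      have e2 : pairL Λ ((q' * p) * G) = 0 := by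
        rw [pairL_apply]
        exact hvan _ (Ideal.mul_mem_right G _ hq'p)
      have e3 : pairL Λ ((1 - q') ^ (N + 1) * p) = 0 := by
        rw [pairL_apply, applyAt_zero_eq]
        apply Finset.sum_eq_zero
        intro α hα
        have hz := lowcoeff (1 - q') p hc1q' (N + 1) α (by have := hdeg α hα; omega)
        simp only [hz, mul_zero]
      rw [e2, e3, add_zero]
end

section
/- Let 𝒟 = (Λ₁,…,Λ_μ) be a basis of the local dual space 𝒟_ζ and consider the system 𝒟f(x) of μ·s polynomials (Λ_i(∂_x)[f_k])_{i=1,…,μ; k=1,…,s}, where Λ_i(∂_x) applies the differential operator and evaluates at the point x. Then the (μ·s) × n Jacobian matrix of 𝒟f with respect to x has full rank n at x = ζ. -/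
open MvPolynomial

namespace S12
variable {n : ℕ}

lemma nderiv_eq_sum (α : Fin n →₀ ℕ) (g : MvPolynomial (Fin n) ℝ) :
    nderiv α g = (AddMonoidAlgebra.coeff g).sum fun γ c => monomial (γ - α) (((∏ i, (γ i).choose (α i) : ℕ) : ℝ) * c) := rfl

lemma nderiv_monomial (α γ : Fin n →₀ ℕ) (c : ℝ) :
    nderiv α (monomial γ c)
      = monomial (γ - α) (((∏ i, (γ i).choose (α i) : ℕ) : ℝ) * c) := by
  rw [nderiv_eq_sum, sum_monomial_eq]
  simp

lemma nderiv_add (α : Fin n →₀ ℕ) (g h : MvPolynomial (Fin n) ℝ) :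
    nderiv α (g + h) = nderiv α g + nderiv α h := by
  rw [nderiv_eq_sum, nderiv_eq_sum, nderiv_eq_sum]
  rw [AddMonoidAlgebra.coeff_add]
  apply Finsupp.sum_add_index' <;> intros <;> simp [mul_add]

lemma nderiv_smul (α : Fin n →₀ ℕ) (r : ℝ) (g : MvPolynomial (Fin n) ℝ) :
    nderiv α (r • g) = r • nderiv α g := by
  induction g using MvPolynomial.induction_on' with
  | monomial γ c => rw [smul_monomial, nderiv_monomial, nderiv_monomial, smul_monomial]; congr 1; simp [smul_eq_mul]; ring
  | add p q hp hq => rw [smul_add, nderiv_add, nderiv_add, hp, hq, smul_add]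


lemma natid1 (m a : ℕ) : m.choose a * (m - a) = (m-1).choose a * m := by
  cases m with
  | zero => simp
  | succ k =>
    have h1 := Nat.choose_succ_right_eq (k+1) a
    have h2 := Nat.add_one_mul_choose_eq k a
    simp only [Nat.succ_eq_add_one, Nat.add_sub_cancel] at *
    rw [← h1, ← h2, mul_comm]

lemma natid2 (m a : ℕ) : m * (m-1).choose a = (a+1) * m.choose (a+1) := by
  cases m with
  | zero => simp
  | succ k =>
    have h2 := Nat.add_one_mul_choose_eq k a
    simp only [Nat.succ_eq_add_one, Nat.add_sub_cancel] at *
    rw [h2, mul_comm]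

lemma sub_single_apply_ne (γ : Fin n →₀ ℕ) (j i : Fin n) (h : i ≠ j) :
    ((γ - Finsupp.single j 1 : Fin n →₀ ℕ) i) = γ i := by
  rw [Finsupp.tsub_apply, Finsupp.single_apply, if_neg h.symm]
  simp

lemma sub_single_apply (γ : Fin n →₀ ℕ) (j : Fin n) :
    ((γ - Finsupp.single j 1 : Fin n →₀ ℕ) j) = γ j - 1 := by
  rw [Finsupp.tsub_apply, Finsupp.single_apply, if_pos rfl]

lemma add_single_apply_ne (α : Fin n →₀ ℕ) (j i : Fin n) (h : i ≠ j) :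
    ((α + Finsupp.single j 1 : Fin n →₀ ℕ) i) = α i := by
  rw [Finsupp.add_apply, Finsupp.single_apply, if_neg h.symm]
  simp

lemma add_single_apply (α : Fin n →₀ ℕ) (j : Fin n) :
    ((α + Finsupp.single j 1 : Fin n →₀ ℕ) j) = α j + 1 := by
  rw [Finsupp.add_apply, Finsupp.single_apply, if_pos rfl]

lemma prodid1 (α γ : Fin n →₀ ℕ) (j : Fin n) :
    (∏ i, (γ i).choose (α i)) * (γ j - α j)
      = (∏ i, ((γ - Finsupp.single j 1 : Fin n →₀ ℕ) i).choose (α i)) * γ j := by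
  have hrest : ∏ i ∈ Finset.univ.erase j, ((γ - Finsupp.single j 1 : Fin n →₀ ℕ) i).choose (α i)
      = ∏ i ∈ Finset.univ.erase j, (γ i).choose (α i) :=
    Finset.prod_congr rfl fun i hi => by
      rw [sub_single_apply_ne γ j i (Finset.ne_of_mem_erase hi)]
  rw [← Finset.mul_prod_erase Finset.univ (fun i => (γ i).choose (α i)) (Finset.mem_univ j),
      ← Finset.mul_prod_erase Finset.univ
        (fun i => ((γ - Finsupp.single j 1 : Fin n →₀ ℕ) i).choose (α i)) (Finset.mem_univ j)]
  simp only [hrest, sub_single_apply]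
  rw [mul_right_comm, natid1, mul_right_comm]

lemma prodid2 (α γ : Fin n →₀ ℕ) (j : Fin n) :
    (∏ i, ((γ - Finsupp.single j 1 : Fin n →₀ ℕ) i).choose (α i)) * γ j
      = (∏ i, (γ i).choose ((α + Finsupp.single j 1 : Fin n →₀ ℕ) i)) * (α j + 1) := by
  have hrest : ∏ i ∈ Finset.univ.erase j, ((γ - Finsupp.single j 1 : Fin n →₀ ℕ) i).choose (α i)
      = ∏ i ∈ Finset.univ.erase j, (γ i).choose (α i) :=
    Finset.prod_congr rfl fun i hi => by
      rw [sub_single_apply_ne γ j i (Finset.ne_of_mem_erase hi)]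
  have hrest2 : ∏ i ∈ Finset.univ.erase j, (γ i).choose ((α + Finsupp.single j 1 : Fin n →₀ ℕ) i)
      = ∏ i ∈ Finset.univ.erase j, (γ i).choose (α i) :=
    Finset.prod_congr rfl fun i hi => by
      rw [add_single_apply_ne α j i (Finset.ne_of_mem_erase hi)]
  rw [← Finset.mul_prod_erase Finset.univ
        (fun i => ((γ - Finsupp.single j 1 : Fin n →₀ ℕ) i).choose (α i)) (Finset.mem_univ j),
      ← Finset.mul_prod_erase Finset.univ
        (fun i => (γ i).choose ((α + Finsupp.single j 1 : Fin n →₀ ℕ) i)) (Finset.mem_univ j)]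
  simp only [hrest, hrest2, sub_single_apply, add_single_apply]
  rw [mul_right_comm, mul_comm _ (γ j), natid2, mul_right_comm]
  ring


lemma pderiv_nderiv (α : Fin n →₀ ℕ) (j : Fin n) (g : MvPolynomial (Fin n) ℝ) :
    pderiv j (nderiv α g) = nderiv α (pderiv j g) := by
  induction g using MvPolynomial.induction_on' with
  | add p q hp hq => rw [nderiv_add, map_add, map_add, nderiv_add, hp, hq]
  | monomial γ c =>
    rw [nderiv_monomial, pderiv_monomial, pderiv_monomial, nderiv_monomial]
    have hexp : (γ - α) - Finsupp.single j 1 = (γ - Finsupp.single j 1) - α := by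
      ext l; simp only [Finsupp.tsub_apply]; omega
    rw [hexp]
    congr 1
    rw [Finsupp.tsub_apply]
    have h1' : ((∏ i, (γ i).choose (α i) : ℕ) : ℝ) * ((γ j - α j : ℕ) : ℝ)
        = ((∏ i, ((γ - Finsupp.single j 1 : Fin n →₀ ℕ) i).choose (α i) : ℕ) : ℝ) * ((γ j : ℕ) : ℝ) := by
      exact_mod_cast congrArg (Nat.cast : ℕ → ℝ) (prodid1 α γ j)
    linear_combination c * h1'

lemma nderiv_pderiv (α : Fin n →₀ ℕ) (j : Fin n) (g : MvPolynomial (Fin n) ℝ) :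
    nderiv α (pderiv j g) = (((α j + 1 : ℕ)) : ℝ) • nderiv (α + Finsupp.single j 1) g := by
  induction g using MvPolynomial.induction_on' with
  | add p q hp hq => rw [map_add, nderiv_add, nderiv_add, hp, hq, smul_add]
  | monomial γ c =>
    rw [pderiv_monomial, nderiv_monomial, nderiv_monomial, smul_monomial]
    have hexp : (γ - Finsupp.single j 1) - α = γ - (α + Finsupp.single j 1) := by
      ext l; simp only [Finsupp.tsub_apply, Finsupp.add_apply]; omega
    rw [hexp]
    congr 1
    have h2' : ((∏ i, ((γ - Finsupp.single j 1 : Fin n →₀ ℕ) i).choose (α i) : ℕ) : ℝ) * ((γ j : ℕ) : ℝ)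
        = ((∏ i, (γ i).choose ((α + Finsupp.single j 1 : Fin n →₀ ℕ) i) : ℕ) : ℝ) * ((α j + 1 : ℕ) : ℝ) := by
      exact_mod_cast congrArg (Nat.cast : ℕ → ℝ) (prodid2 α γ j)
    rw [smul_eq_mul]
    push_cast at h2' ⊢
    linear_combination c * h2'


noncomputable def Dfun {n : ℕ} (ζ : Fin n → ℝ) (α : Fin n →₀ ℕ)
    (g : MvPolynomial (Fin n) ℝ) : ℝ := eval ζ (nderiv α g)

lemma Dfun_add (ζ : Fin n → ℝ) (α : Fin n →₀ ℕ) (g h : MvPolynomial (Fin n) ℝ) :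
    Dfun ζ α (g + h) = Dfun ζ α g + Dfun ζ α h := by
  unfold Dfun; rw [nderiv_add, map_add]

lemma Dfun_sub (ζ : Fin n → ℝ) (α : Fin n →₀ ℕ) (g h : MvPolynomial (Fin n) ℝ) :
    Dfun ζ α (g - h) = Dfun ζ α g - Dfun ζ α h := by
  have := Dfun_add ζ α (g - h) h
  rw [sub_add_cancel] at this; linarith

lemma Dfun_monomial (ζ : Fin n → ℝ) (α γ : Fin n →₀ ℕ) (c : ℝ) :
    Dfun ζ α (monomial γ c)
      = c * ∏ l, (((γ l).choose (α l) : ℝ) * ζ l ^ ((γ - α : Fin n →₀ ℕ) l)) := by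
  unfold Dfun
  rw [nderiv_monomial, eval_monomial, Finsupp.prod_fintype _ _ (fun i => pow_zero _),
    Finset.prod_mul_distrib]
  push_cast
  ring


lemma scalar_id (z : ℝ) (gi ai : ℕ) :
    (((gi+1).choose ai : ℕ) : ℝ) * z^(gi+1-ai) - z * (((gi.choose ai : ℕ) : ℝ) * z^(gi-ai))
      = if ai = 0 then 0 else ((gi.choose (ai-1) : ℕ) : ℝ) * z^(gi-(ai-1)) := by
  rcases ai with _ | a
  · simp [pow_succ]; ring
  · rw [if_neg (Nat.succ_ne_zero a)]
    simp only [Nat.succ_eq_add_one, Nat.add_sub_cancel]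
    rcases le_or_gt (a+1) gi with h | h
    · have e1 : gi+1-(a+1) = (gi-(a+1))+1 := by omega
      have e3 : gi - a = (gi-(a+1))+1 := by omega
      rw [e1, e3]
      have pas : (((gi+1).choose (a+1) : ℕ) : ℝ)
          = ((gi.choose a : ℕ) : ℝ) + ((gi.choose (a+1) : ℕ) : ℝ) := by
        exact_mod_cast congrArg (Nat.cast : ℕ → ℝ) (Nat.choose_succ_succ gi a)
      rw [pas]; ring
    · rcases Nat.lt_or_ge gi a with h2 | h2
      · have c1 : (gi+1).choose (a+1) = 0 := Nat.choose_eq_zero_of_lt (by omega)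
        have c2 : gi.choose (a+1) = 0 := Nat.choose_eq_zero_of_lt (by omega)
        have c3 : gi.choose a = 0 := Nat.choose_eq_zero_of_lt (by omega)
        rw [c1, c2, c3]; simp
      · have hga : gi = a := by omega
        subst hga
        have c2 : gi.choose (gi+1) = 0 := Nat.choose_eq_zero_of_lt (by omega)
        rw [c2, Nat.choose_self, Nat.choose_self]
        simp

lemma Dfun_shift (ζ : Fin n → ℝ) (α : Fin n →₀ ℕ) (i : Fin n)
    (g : MvPolynomial (Fin n) ℝ) :
    Dfun ζ α ((X i - C (ζ i)) * g)
      = if α i = 0 then 0 else Dfun ζ (α - Finsupp.single i 1) g := by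
  induction g using MvPolynomial.induction_on' with
  | add p q hp hq =>
    rw [mul_add, Dfun_add, hp, hq, Dfun_add]
    split_ifs <;> simp
  | monomial γ c =>
    have hXm : (X i - C (ζ i)) * monomial γ c
        = monomial (γ + Finsupp.single i 1) c - monomial γ (ζ i * c) := by
      rw [sub_mul, C_mul_monomial]
      congr 1
      rw [X, monomial_mul, one_mul, add_comm]
    rw [hXm, Dfun_sub, Dfun_monomial, Dfun_monomial, Dfun_monomial]
    set R := ∏ l ∈ Finset.univ.erase i, (((γ l).choose (α l) : ℝ) * ζ l ^ ((γ - α : Fin n →₀ ℕ) l)) with hR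
    have hP1 : ∏ l, ((((γ + Finsupp.single i 1 : Fin n →₀ ℕ) l).choose (α l) : ℝ)
          * ζ l ^ (((γ + Finsupp.single i 1 : Fin n →₀ ℕ) - α : Fin n →₀ ℕ) l))
        = (((γ i + 1).choose (α i) : ℝ) * ζ i ^ (γ i + 1 - α i)) * R := by
      rw [← Finset.mul_prod_erase Finset.univ _ (Finset.mem_univ i)]
      refine congrArg₂ (· * ·) ?_ ?_
      · rw [add_single_apply, Finsupp.tsub_apply, add_single_apply]
      · exact Finset.prod_congr rfl fun l hl => by
          rw [add_single_apply_ne γ i l (Finset.ne_of_mem_erase hl), Finsupp.tsub_apply,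
            add_single_apply_ne γ i l (Finset.ne_of_mem_erase hl), Finsupp.tsub_apply]
    have hP2 : ∏ l, (((γ l).choose (α l) : ℝ) * ζ l ^ ((γ - α : Fin n →₀ ℕ) l))
        = (((γ i).choose (α i) : ℝ) * ζ i ^ (γ i - α i)) * R := by
      rw [← Finset.mul_prod_erase Finset.univ _ (Finset.mem_univ i)]
      refine congrArg₂ (· * ·) ?_ rfl
      rw [Finsupp.tsub_apply]
    have hP3 : ∏ l, (((γ l).choose ((α - Finsupp.single i 1 : Fin n →₀ ℕ) l) : ℝ)
          * ζ l ^ ((γ - (α - Finsupp.single i 1) : Fin n →₀ ℕ) l))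
        = (((γ i).choose (α i - 1) : ℝ) * ζ i ^ (γ i - (α i - 1))) * R := by
      rw [← Finset.mul_prod_erase Finset.univ _ (Finset.mem_univ i)]
      refine congrArg₂ (· * ·) ?_ ?_
      · rw [sub_single_apply, Finsupp.tsub_apply, sub_single_apply]
      · exact Finset.prod_congr rfl fun l hl => by
          rw [sub_single_apply_ne α i l (Finset.ne_of_mem_erase hl), Finsupp.tsub_apply,
            sub_single_apply_ne α i l (Finset.ne_of_mem_erase hl), Finsupp.tsub_apply]
    rw [hP1, hP2, hP3]
    have hs := scalar_id (ζ i) (γ i) (α i)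
    split_ifs with hai
    · rw [hai] at hs ⊢; norm_num at hs ⊢
      linear_combination c * R * hs
    · rw [if_neg hai] at hs
      linear_combination c * R * hs


lemma Dfun_zero (ζ : Fin n → ℝ) (α : Fin n →₀ ℕ) : Dfun ζ α (0 : MvPolynomial (Fin n) ℝ) = 0 := by
  have := Dfun_add ζ α 0 0
  simp only [add_zero] at this
  linarith

lemma Dfun_smul (ζ : Fin n → ℝ) (α : Fin n →₀ ℕ) (r : ℝ) (g : MvPolynomial (Fin n) ℝ) :
    Dfun ζ α (r • g) = r * Dfun ζ α g := by
  unfold Dfun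
  rw [nderiv_smul, smul_eq_C_mul, map_mul, eval_C]

lemma applyAt_def (ζ : Fin n → ℝ) (Λ : (Fin n →₀ ℕ) →₀ ℝ) (g : MvPolynomial (Fin n) ℝ) :
    applyAt ζ Λ g = Λ.sum fun α c => c * Dfun ζ α g := by
  unfold applyAt applyAtL Dfun
  rw [Finsupp.linearCombination_apply]
  simp only [smul_eq_mul]

lemma applyAt_single (ζ : Fin n → ℝ) (α : Fin n →₀ ℕ) (c : ℝ) (g : MvPolynomial (Fin n) ℝ) :
    applyAt ζ (Finsupp.single α c) g = c * Dfun ζ α g := by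
  unfold applyAt applyAtL Dfun
  rw [Finsupp.linearCombination_single]
  simp [smul_eq_mul]

lemma applyAt_addL (ζ : Fin n → ℝ) (Λ M : (Fin n →₀ ℕ) →₀ ℝ) (g : MvPolynomial (Fin n) ℝ) :
    applyAt ζ (Λ + M) g = applyAt ζ Λ g + applyAt ζ M g := by
  unfold applyAt; rw [map_add]

lemma applyAt_add_right (ζ : Fin n → ℝ) (Λ : (Fin n →₀ ℕ) →₀ ℝ)
    (g h : MvPolynomial (Fin n) ℝ) :
    applyAt ζ Λ (g + h) = applyAt ζ Λ g + applyAt ζ Λ h := by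
  rw [applyAt_def, applyAt_def, applyAt_def, ← Finsupp.sum_add]
  exact Finsupp.sum_congr fun α _ => by rw [Dfun_add]; ring

lemma applyAt_smul_right (ζ : Fin n → ℝ) (Λ : (Fin n →₀ ℕ) →₀ ℝ) (r : ℝ)
    (g : MvPolynomial (Fin n) ℝ) :
    applyAt ζ Λ (r • g) = r * applyAt ζ Λ g := by
  rw [applyAt_def, applyAt_def, Finsupp.mul_sum]
  exact Finsupp.sum_congr fun α _ => by rw [Dfun_smul]; ring

lemma applyAt_zero_right (ζ : Fin n → ℝ) (Λ : (Fin n →₀ ℕ) →₀ ℝ) :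
    applyAt ζ Λ (0 : MvPolynomial (Fin n) ℝ) = 0 := by
  rw [applyAt_def]
  simp only [Dfun_zero, mul_zero]
  exact Finset.sum_const_zero

/-- `applyAt` as a linear map in `g`. -/
noncomputable def applyAtR (ζ : Fin n → ℝ) (Λ : (Fin n →₀ ℕ) →₀ ℝ) :
    MvPolynomial (Fin n) ℝ →ₗ[ℝ] ℝ where
  toFun g := applyAt ζ Λ g
  map_add' g h := applyAt_add_right ζ Λ g h
  map_smul' r g := applyAt_smul_right ζ Λ r g

lemma applyAtR_apply (ζ : Fin n → ℝ) (Λ : (Fin n →₀ ℕ) →₀ ℝ) (g : MvPolynomial (Fin n) ℝ) :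
    applyAtR ζ Λ g = applyAt ζ Λ g := rfl

lemma dshift_apply (i : Fin n) (Λ : (Fin n →₀ ℕ) →₀ ℝ) (β : Fin n →₀ ℕ) :
    dshift i Λ β = Λ (β + Finsupp.single i 1) := rfl

lemma dshift_add (i : Fin n) (Λ M : (Fin n →₀ ℕ) →₀ ℝ) :
    dshift i (Λ + M) = dshift i Λ + dshift i M := by
  ext β; simp [dshift_apply, Finsupp.add_apply]

lemma dshift_single_zero (i : Fin n) (α : Fin n →₀ ℕ) (c : ℝ) (h : α i = 0) :
    dshift i (Finsupp.single α c) = 0 := by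
  ext β
  rw [dshift_apply]
  have : β + Finsupp.single i 1 ≠ α := by
    intro he
    have h2 := congrArg (fun δ : Fin n →₀ ℕ => δ i) he
    simp only [Finsupp.add_apply, Finsupp.single_eq_same] at h2
    omega
  rw [Finsupp.single_eq_of_ne' (Ne.symm this)]
  rfl

lemma dshift_single_pos (i : Fin n) (α : Fin n →₀ ℕ) (c : ℝ) (h : α i ≠ 0) :
    dshift i (Finsupp.single α c) = Finsupp.single (α - Finsupp.single i 1) c := by
  ext β
  rw [dshift_apply]
  by_cases hβ : β = α - Finsupp.single i 1
  · subst hβ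
    have he : α - Finsupp.single i 1 + Finsupp.single i 1 = α := by
      ext l
      by_cases hl : l = i
      · subst hl
        rw [Finsupp.add_apply, sub_single_apply, Finsupp.single_apply, if_pos rfl]
        omega
      · rw [Finsupp.add_apply, sub_single_apply_ne α i l hl, Finsupp.single_apply,
          if_neg (by exact fun hh => hl hh.symm)]
        omega
    rw [he, Finsupp.single_eq_same, Finsupp.single_eq_same]
  · have : β + Finsupp.single i 1 ≠ α := by
      intro he
      apply hβ
      rw [← he]
      ext l
      by_cases hl : l = i
      · subst hl
        rw [sub_single_apply, Finsupp.add_apply, Finsupp.single_apply, if_pos rfl]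
        omega
      · rw [sub_single_apply_ne _ i l hl, Finsupp.add_apply, Finsupp.single_apply,
          if_neg (by exact fun hh => hl hh.symm)]
        omega
    rw [Finsupp.single_eq_of_ne' (Ne.symm this), Finsupp.single_eq_of_ne' (by exact fun hh => hβ hh.symm)]

lemma applyAt_dshift (ζ : Fin n → ℝ) (i : Fin n) (g : MvPolynomial (Fin n) ℝ)
    (Λ : (Fin n →₀ ℕ) →₀ ℝ) :
    applyAt ζ (dshift i Λ) g = applyAt ζ Λ ((X i - C (ζ i)) * g) := by
  induction Λ using Finsupp.induction with
  | zero =>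
    have h0 : dshift i (0 : (Fin n →₀ ℕ) →₀ ℝ) = 0 := by ext β; rfl
    rw [h0]
    unfold applyAt; rw [map_zero, map_zero]
  | single_add α c Λ hnot hc ih =>
    rw [dshift_add, applyAt_addL, applyAt_addL, ih]
    congr 1
    by_cases h : α i = 0
    · rw [dshift_single_zero i α c h]
      rw [applyAt_single, Dfun_shift, if_pos h]
      have : applyAt ζ (0 : (Fin n →₀ ℕ) →₀ ℝ) g = 0 := by unfold applyAt; rw [map_zero]
      rw [this]; ring
    · rw [dshift_single_pos i α c h, applyAt_single, applyAt_single, Dfun_shift, if_neg h]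

lemma mem_dualSpace (ζ : Fin n → ℝ) (Q : Ideal (MvPolynomial (Fin n) ℝ))
    (Λ : (Fin n →₀ ℕ) →₀ ℝ) :
    Λ ∈ dualSpace ζ Q ↔ ∀ p ∈ Q, applyAt ζ Λ p = 0 := by
  unfold dualSpace applyAt
  simp [Submodule.mem_iInf, LinearMap.mem_ker]

lemma dshift_mem_dualSpace {ζ : Fin n → ℝ} {Q : Ideal (MvPolynomial (Fin n) ℝ)}
    {Λ : (Fin n →₀ ℕ) →₀ ℝ} (h : Λ ∈ dualSpace ζ Q) (i : Fin n) :
    dshift i Λ ∈ dualSpace ζ Q := by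
  rw [mem_dualSpace] at h ⊢
  intro p hp
  rw [applyAt_dshift]
  exact h _ (Ideal.mul_mem_left _ _ hp)

/-- The perp of the dual space, as an ideal. -/
noncomputable def Kideal (ζ : Fin n → ℝ) (Q : Ideal (MvPolynomial (Fin n) ℝ)) :
    Ideal (MvPolynomial (Fin n) ℝ) where
  carrier := {g | ∀ Λ ∈ dualSpace ζ Q, applyAt ζ Λ g = 0}
  zero_mem' := fun Λ _ => (applyAtR ζ Λ).map_zero
  add_mem' := by
    intro a b ha hb Λ hΛ
    rw [applyAt_add_right, ha Λ hΛ, hb Λ hΛ, add_zero]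
  smul_mem' := by
    intro c g hg
    simp only [smul_eq_mul, Set.mem_setOf_eq] at *
    induction c using MvPolynomial.induction_on with
    | C a =>
      intro Λ hΛ
      rw [← smul_eq_C_mul, applyAt_smul_right, hg Λ hΛ, mul_zero]
    | add p q hp hq =>
      intro Λ hΛ
      rw [add_mul, applyAt_add_right, hp Λ hΛ, hq Λ hΛ, add_zero]
    | mul_X p i hp =>
      intro Λ hΛ
      have hre : p * X i * g = (X i - C (ζ i)) * (p * g) + (ζ i) • (p * g) := by
        rw [smul_eq_C_mul]; ring
      rw [hre, applyAt_add_right, ← applyAt_dshift, applyAt_smul_right,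
        hp Λ hΛ, hp (dshift i Λ) (dshift_mem_dualSpace hΛ i), mul_zero, add_zero]

lemma mem_Kideal_iff (ζ : Fin n → ℝ) (Q : Ideal (MvPolynomial (Fin n) ℝ))
    (g : MvPolynomial (Fin n) ℝ) :
    g ∈ Kideal ζ Q ↔ ∀ Λ ∈ dualSpace ζ Q, applyAt ζ Λ g = 0 := Iff.rfl

lemma multideg_eq_sum (α : Fin n →₀ ℕ) : multideg α = ∑ l, α l := by
  unfold multideg
  exact Finsupp.sum_fintype _ _ fun _ => rfl

lemma multideg_sub_single_lt (α : Fin n →₀ ℕ) (i : Fin n) (h : α i ≠ 0) :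
    multideg (α - Finsupp.single i 1) + 1 = multideg α := by
  rw [multideg_eq_sum, multideg_eq_sum]
  have h1 : ∑ l, (α - Finsupp.single i 1 : Fin n →₀ ℕ) l
      = (∑ l ∈ Finset.univ.erase i, α l) + (α i - 1) := by
    rw [← Finset.sum_erase_add Finset.univ _ (Finset.mem_univ i), sub_single_apply]
    congr 1
    exact Finset.sum_congr rfl fun l hl => sub_single_apply_ne α i l (Finset.ne_of_mem_erase hl)
  have h2 : ∑ l, α l = (∑ l ∈ Finset.univ.erase i, α l) + α i := by
    rw [← Finset.sum_erase_add Finset.univ _ (Finset.mem_univ i)]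
  rw [h1, h2]
  omega

lemma eval_eq_zero_of_mem_max {ζ : Fin n → ℝ} {p : MvPolynomial (Fin n) ℝ}
    (h : p ∈ maxIdealAt ζ) : eval ζ p = 0 := by
  have hle : maxIdealAt ζ ≤ RingHom.ker (eval ζ) := by
    rw [maxIdealAt, Ideal.span_le]
    rintro q ⟨i, rfl⟩
    simp [RingHom.mem_ker]
  exact RingHom.mem_ker.1 (hle h)

lemma sub_C_mem_max (ζ : Fin n → ℝ) (p : MvPolynomial (Fin n) ℝ) :
    p - C (eval ζ p) ∈ maxIdealAt ζ := by
  induction p using MvPolynomial.induction_on with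
  | C a => simp
  | add p q hp hq =>
    have : p + q - C (eval ζ (p + q)) = (p - C (eval ζ p)) + (q - C (eval ζ q)) := by
      rw [map_add, map_add]; ring
    rw [this]
    exact add_mem hp hq
  | mul_X p i hp =>
    have hXm : X i - C (ζ i) ∈ maxIdealAt ζ := Ideal.subset_span ⟨i, rfl⟩
    have : p * X i - C (eval ζ (p * X i))
        = p * (X i - C (ζ i)) + C (ζ i) * (p - C (eval ζ p)) := by
      rw [map_mul, eval_X, map_mul]; ring
    rw [this]
    exact add_mem (Ideal.mul_mem_left _ _ hXm) (Ideal.mul_mem_left _ _ hp)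

lemma mem_max_of_eval_eq_zero {ζ : Fin n → ℝ} {p : MvPolynomial (Fin n) ℝ}
    (h : eval ζ p = 0) : p ∈ maxIdealAt ζ := by
  have := sub_C_mem_max ζ p
  rw [h] at this
  simpa using this

lemma Dfun_vanish (ζ : Fin n → ℝ) :
    ∀ (k : ℕ) (q : MvPolynomial (Fin n) ℝ), q ∈ (maxIdealAt ζ)^k →
      ∀ (α : Fin n →₀ ℕ), multideg α < k → ∀ g, Dfun ζ α (q * g) = 0 := by
  intro k
  induction k with
  | zero => intro q hq α hα; omega
  | succ k ih =>
    intro q hq α hα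
    rw [pow_succ] at hq
    refine Submodule.mul_induction_on hq ?_ ?_
    · intro a ha b hb
      have hb' : b ∈ Ideal.span (Set.range fun i => X i - C (ζ i)) := hb
      refine Submodule.span_induction ?_ ?_ ?_ ?_ hb'
      · rintro x ⟨i, rfl⟩ g
        rw [show a * (X i - C (ζ i)) * g = (X i - C (ζ i)) * (a * g) by ring, Dfun_shift]
        split_ifs with hzero
        · rfl
        · have hlt : multideg (α - Finsupp.single i 1) < k := by
            have := multideg_sub_single_lt α i hzero
            omega
          exact ih a ha _ hlt g
      · intro g
        rw [mul_zero, zero_mul, Dfun_zero]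
      · intro x y hx hy hmx hmy g
        rw [show a * (x + y) * g = a * x * g + a * y * g by ring, Dfun_add, hmx g, hmy g, add_zero]
      · intro r x hx hmx g
        rw [smul_eq_mul, show a * (r * x) * g = a * x * (r * g) by ring]
        exact hmx (r * g)
    · intro x y hx hy g
      rw [show (x + y) * g = x * g + y * g by ring, Dfun_add, hx g, hy g, add_zero]

lemma applyAt_highpow_eq_zero (ζ : Fin n → ℝ) (Λ : (Fin n →₀ ℕ) →₀ ℝ)
    (q : MvPolynomial (Fin n) ℝ)
    (h : q ∈ (maxIdealAt ζ)^(Λ.support.sup multideg + 1)) : applyAt ζ Λ q = 0 := by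
  rw [applyAt_def]
  apply Finset.sum_eq_zero
  intro α hα
  have hD : Dfun ζ α q = 0 := by
    rw [← mul_one q]
    exact Dfun_vanish ζ _ q h α (Nat.lt_succ_of_le (Finset.le_sup hα)) 1
  show Λ α * Dfun ζ α q = 0
  rw [hD, mul_zero]

lemma mem_dual_of_vanish_on_I {ζ : Fin n → ℝ} {Q : Ideal (MvPolynomial (Fin n) ℝ)}
    (S : Finset (Ideal (MvPolynomial (Fin n) ℝ)))
    (hS : ∀ P ∈ S, ¬ P.radical ≤ maxIdealAt ζ)
    (Λ : (Fin n →₀ ℕ) →₀ ℝ)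
    (hI : ∀ g ∈ S.inf id ⊓ Q, applyAt ζ Λ g = 0) :
    Λ ∈ dualSpace ζ Q := by
  classical
  rw [mem_dualSpace]
  intro q hq
  -- build a polynomial h in all P ∈ S not vanishing at ζ
  have hex : ∀ P : {P // P ∈ S}, ∃ (x : MvPolynomial (Fin n) ℝ) (k : ℕ),
      x ^ k ∈ (P : Ideal (MvPolynomial (Fin n) ℝ)) ∧ eval ζ x ≠ 0 := by
    rintro ⟨P, hP⟩
    have hnot := hS P hP
    rw [SetLike.not_le_iff_exists] at hnot
    obtain ⟨x, hx1, hx2⟩ := hnot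
    obtain ⟨k, hk⟩ := Ideal.mem_radical_iff.1 hx1
    exact ⟨x, k, hk, fun h0 => hx2 (mem_max_of_eval_eq_zero h0)⟩
  choose xf kf hmem hne using hex
  set h : MvPolynomial (Fin n) ℝ := ∏ P ∈ S.attach, xf P ^ kf P with hh
  have hevalh : eval ζ h ≠ 0 := by
    rw [hh, map_prod]
    rw [Finset.prod_ne_zero_iff]
    intro P _
    rw [map_pow]
    exact pow_ne_zero _ (hne P)
  have hinP : ∀ P ∈ S, h ∈ P := by
    intro P hP
    rw [hh, ← Finset.mul_prod_erase S.attach _ (Finset.mem_attach S ⟨P, hP⟩)]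
    exact Ideal.mul_mem_right _ _ (hmem ⟨P, hP⟩)
  set c : ℝ := eval ζ h with hc
  set t : ℕ := Λ.support.sup multideg with ht
  set u : MvPolynomial (Fin n) ℝ :=
    C c⁻¹ * ∑ i ∈ Finset.range (t+1), (1 - C c⁻¹ * h) ^ i with hu
  have hgeom : 1 - u * h = (1 - C c⁻¹ * h) ^ (t+1) := by
    have hg := geom_sum_mul (1 - C c⁻¹ * h) (t+1)
    rw [hu]
    linear_combination hg
  have hmemmax : (1 : MvPolynomial (Fin n) ℝ) - C c⁻¹ * h ∈ maxIdealAt ζ := by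
    apply mem_max_of_eval_eq_zero
    rw [map_sub, map_mul, eval_C, map_one, ← hc, inv_mul_cancel₀ hevalh, sub_self]
  have hq1 : applyAt ζ Λ (u * h * q) = 0 := by
    apply hI
    rw [Submodule.mem_inf]
    constructor
    · rw [Finset.inf_eq_iInf]
      rw [Submodule.mem_iInf]
      intro P
      rw [Submodule.mem_iInf]
      intro hP
      show u * h * q ∈ P
      rw [mul_assoc, mul_comm h q, ← mul_assoc]
      exact Ideal.mul_mem_left _ _ (hinP P hP)
    · exact Ideal.mul_mem_left _ _ hq
  have hq2 : applyAt ζ Λ ((1 - u * h) * q) = 0 := by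
    rw [hgeom]
    apply applyAt_highpow_eq_zero
    rw [← ht]
    exact Ideal.mul_mem_right _ _ (Ideal.pow_mem_pow hmemmax (t+1))
  have hdecomp : q = u * h * q + (1 - u * h) * q := by ring
  calc applyAt ζ Λ q = applyAt ζ Λ (u * h * q + (1 - u * h) * q) := by rw [← hdecomp]
    _ = applyAt ζ Λ (u * h * q) + applyAt ζ Λ ((1 - u * h) * q) := applyAt_add_right ζ Λ _ _
    _ = 0 := by rw [hq1, hq2, add_zero]


-- raise
noncomputable def raiseL (j : Fin n) :
    ((Fin n →₀ ℕ) →₀ ℝ) →ₗ[ℝ] ((Fin n →₀ ℕ) →₀ ℝ) :=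
  Finsupp.lsum ℝ fun α => (((α j + 1 : ℕ) : ℝ)) • Finsupp.lsingle (α + Finsupp.single j 1)

lemma raiseL_single (j : Fin n) (α : Fin n →₀ ℕ) (c : ℝ) :
    raiseL j (Finsupp.single α c)
      = ((α j + 1 : ℕ) : ℝ) • Finsupp.single (α + Finsupp.single j 1) c := by
  rw [raiseL, Finsupp.lsum_single]
  rfl

lemma applyAt_zeroL (ζ : Fin n → ℝ) (g : MvPolynomial (Fin n) ℝ) :
    applyAt ζ (0 : (Fin n →₀ ℕ) →₀ ℝ) g = 0 := by
  unfold applyAt; rw [map_zero]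

lemma applyAt_smulL (ζ : Fin n → ℝ) (r : ℝ) (Λ : (Fin n →₀ ℕ) →₀ ℝ)
    (g : MvPolynomial (Fin n) ℝ) :
    applyAt ζ (r • Λ) g = r * applyAt ζ Λ g := by
  unfold applyAt; rw [map_smul, smul_eq_mul]

lemma Dfun_pderiv (ζ : Fin n → ℝ) (α : Fin n →₀ ℕ) (j : Fin n)
    (g : MvPolynomial (Fin n) ℝ) :
    Dfun ζ α (pderiv j g) = ((α j + 1 : ℕ) : ℝ) * Dfun ζ (α + Finsupp.single j 1) g := by
  unfold Dfun
  rw [nderiv_pderiv, smul_eq_C_mul, map_mul, eval_C]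

lemma applyAt_raiseL (ζ : Fin n → ℝ) (j : Fin n) (g : MvPolynomial (Fin n) ℝ)
    (Λ : (Fin n →₀ ℕ) →₀ ℝ) :
    applyAt ζ (raiseL j Λ) g = applyAt ζ Λ (pderiv j g) := by
  induction Λ using Finsupp.induction with
  | zero => rw [map_zero, applyAt_zeroL, applyAt_zeroL]
  | single_add α c Λ hnot hc ih =>
    rw [map_add, applyAt_addL, applyAt_addL, ih]
    congr 1
    rw [raiseL_single, applyAt_smulL, applyAt_single, applyAt_single, Dfun_pderiv]
    ring

lemma eval_pderiv_applyPoly (ζ : Fin n → ℝ) (Λ : (Fin n →₀ ℕ) →₀ ℝ)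
    (g : MvPolynomial (Fin n) ℝ) (j : Fin n) :
    eval ζ (pderiv j (applyPoly Λ g)) = applyAt ζ Λ (pderiv j g) := by
  have h1 : pderiv j (applyPoly Λ g) = applyPoly Λ (pderiv j g) := by
    unfold applyPoly
    rw [map_finsuppSum]
    exact Finsupp.sum_congr fun α _ => by
      rw [(pderiv j).map_smul, pderiv_nderiv]
  rw [h1]
  unfold applyPoly
  rw [map_finsuppSum, applyAt_def]
  exact Finsupp.sum_congr fun α _ => by
    rw [smul_eq_C_mul, map_mul, eval_C]
    rfl

-- iota
noncomputable def factR (α : Fin n →₀ ℕ) : ℝ := ∏ i, ((α i).factorial : ℝ)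

lemma factR_ne_zero (α : Fin n →₀ ℕ) : factR α ≠ 0 := by
  rw [factR, Finset.prod_ne_zero_iff]
  intro i _
  exact_mod_cast (Nat.factorial_pos (α i)).ne'

noncomputable def iota : ((Fin n →₀ ℕ) →₀ ℝ) →ₗ[ℝ] MvPolynomial (Fin n) ℝ :=
  Finsupp.lsum ℝ fun α => (factR α)⁻¹ • (monomial α : ℝ →ₗ[ℝ] MvPolynomial (Fin n) ℝ)

lemma iota_single (α : Fin n →₀ ℕ) (c : ℝ) :
    iota (Finsupp.single α c) = monomial α ((factR α)⁻¹ * c) := by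
  rw [iota, Finsupp.lsum_single, LinearMap.smul_apply, smul_monomial]
  rfl

lemma coeff_iota (β : Fin n →₀ ℕ) (Λ : (Fin n →₀ ℕ) →₀ ℝ) :
    coeff β (iota Λ) = (factR β)⁻¹ * Λ β := by
  induction Λ using Finsupp.induction with
  | zero => simp
  | single_add α c Λ hnot hc ih =>
    rw [map_add, coeff_add, ih, iota_single, coeff_monomial, Finsupp.add_apply,
      Finsupp.single_apply]
    by_cases h : α = β
    · subst h; simp [mul_add]
    · simp [h]

lemma iota_injective : Function.Injective (iota : ((Fin n →₀ ℕ) →₀ ℝ) →ₗ[ℝ] _) := by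
  intro a b hab
  ext β
  have h := congrArg (coeff β) hab
  rw [coeff_iota, coeff_iota] at h
  exact mul_left_cancel₀ (inv_ne_zero (factR_ne_zero β)) h

lemma factR_add_single (α : Fin n →₀ ℕ) (j : Fin n) :
    factR (α + Finsupp.single j 1) = factR α * ((α j + 1 : ℕ) : ℝ) := by
  rw [factR, factR,
    ← Finset.mul_prod_erase Finset.univ _ (Finset.mem_univ j),
    ← Finset.mul_prod_erase Finset.univ (fun i => ((α i).factorial : ℝ)) (Finset.mem_univ j)]
  have hrest : ∏ i ∈ Finset.univ.erase j, (((α + Finsupp.single j 1 : Fin n →₀ ℕ) i).factorial : ℝ)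
      = ∏ i ∈ Finset.univ.erase j, ((α i).factorial : ℝ) := by
    refine Finset.prod_congr rfl fun i hi => ?_
    rw [Finsupp.add_apply, Finsupp.single_apply,
      if_neg (fun hh => (Finset.ne_of_mem_erase hi) hh.symm), add_zero]
  rw [hrest, add_single_apply]
  have : (((α j + 1).factorial : ℕ) : ℝ) = ((α j).factorial : ℝ) * ((α j + 1 : ℕ) : ℝ) := by
    rw [Nat.factorial_succ]
    push_cast
    ring
  rw [this]
  ring

lemma iota_raiseL (j : Fin n) (Λ : (Fin n →₀ ℕ) →₀ ℝ) :
    iota (raiseL j Λ) = X j * iota Λ := by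
  induction Λ using Finsupp.induction with
  | zero => rw [map_zero, map_zero, mul_zero]
  | single_add α c Λ hnot hc ih =>
    rw [map_add, map_add, map_add, mul_add, ih]
    congr 1
    rw [raiseL_single, map_smul, iota_single, iota_single]
    have hX : X j * monomial α ((factR α)⁻¹ * c)
        = monomial (α + Finsupp.single j 1) ((factR α)⁻¹ * c) := by
      rw [X, monomial_mul, one_mul, add_comm]
    rw [hX, smul_monomial]
    congr 1
    rw [factR_add_single]
    have h1 : ((α j + 1 : ℕ) : ℝ) ≠ 0 := by positivity
    have h2 : factR α ≠ 0 := factR_ne_zero α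
    rw [smul_eq_mul, mul_inv]
    field_simp

lemma raiseL_apply_zero (j : Fin n) (Λ : (Fin n →₀ ℕ) →₀ ℝ) :
    (raiseL j Λ) (0 : Fin n →₀ ℕ) = 0 := by
  induction Λ using Finsupp.induction with
  | zero => simp
  | single_add α c Λ hnot hc ih =>
    rw [map_add, Finsupp.add_apply, ih, raiseL_single, add_zero, Finsupp.smul_apply]
    rw [Finsupp.single_eq_of_ne, smul_zero]
    intro hh
    have := congrArg (fun δ : Fin n →₀ ℕ => δ j) hh
    simp only [Finsupp.add_apply, Finsupp.single_eq_same, Finsupp.coe_zero, Pi.zero_apply] at this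
    omega

lemma nderiv_zero_index (g : MvPolynomial (Fin n) ℝ) : nderiv (0 : Fin n →₀ ℕ) g = g := by
  unfold nderiv
  simp only [Finsupp.coe_zero, Pi.zero_apply, Nat.choose_zero_right, Finset.prod_const_one,
    Nat.cast_one, one_mul, tsub_zero]
  exact support_sum_monomial_coeff g

lemma smul_mem_ideal (r : ℝ) (J : Ideal (MvPolynomial (Fin n) ℝ))
    {x : MvPolynomial (Fin n) ℝ} (hx : x ∈ J) : r • x ∈ J := by
  rw [smul_eq_C_mul]; exact Ideal.mul_mem_left _ _ hx


end S12

open S12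

/-- for a basis `(Λ₁,…,Λ_μ)` of the local dual space `𝒟_ζ`, the
`(μ·s) × n` Jacobian matrix of the system `𝒟f = (Λ_i(∂_x)[f_k])_{i,k}` with
respect to `x` has full rank `n` at `x = ζ`. -/
theorem stmt12 {n s μ : ℕ} (f : Fin s → MvPolynomial (Fin n) ℝ) (ζ : Fin n → ℝ)
    (Q : Ideal (MvPolynomial (Fin n) ℝ))
    (hQ : IsPrimaryComponentAt ζ (Ideal.span (Set.range f)) Q)
    (Λs : Fin μ → ((Fin n →₀ ℕ) →₀ ℝ))
    (hΛli : LinearIndependent ℝ Λs)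
    (hΛsp : Submodule.span ℝ (Set.range Λs) = dualSpace ζ Q) :
    Matrix.rank (Matrix.of fun (ik : Fin μ × Fin s) (j : Fin n) =>
      MvPolynomial.eval ζ (MvPolynomial.pderiv j (applyPoly (Λs ik.1) (f ik.2)))) = n := by
  classical
  obtain ⟨hQprim, hrad, S, hS, hIdec⟩ := hQ
  set M : Matrix (Fin μ × Fin s) (Fin n) ℝ := Matrix.of fun (ik : Fin μ × Fin s) (j : Fin n) =>
      MvPolynomial.eval ζ (MvPolynomial.pderiv j (applyPoly (Λs ik.1) (f ik.2))) with hM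
  haveI hfd : FiniteDimensional ℝ (dualSpace ζ Q) :=
    hΛsp ▸ FiniteDimensional.span_of_finite ℝ (Set.finite_range Λs)
  have hker : ∀ v : Fin n → ℝ, M.mulVec v = 0 → v = 0 := by
    intro v hv
    by_contra hv0
    set Dv : MvPolynomial (Fin n) ℝ → MvPolynomial (Fin n) ℝ :=
      fun g => ∑ j, v j • pderiv j g with hDv
    have hrow : ∀ (i : Fin μ) (k : Fin s), applyAt ζ (Λs i) (Dv (f k)) = 0 := by
      intro i k
      have h0 := congrFun hv (i, k)
      simp only [Matrix.mulVec, dotProduct, Pi.zero_apply, hM, Matrix.of_apply] at h0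
      have hEq : applyAt ζ (Λs i) (Dv (f k))
          = ∑ j, eval ζ (pderiv j (applyPoly (Λs i) (f k))) * v j := by
        rw [hDv]
        rw [show applyAt ζ (Λs i) (∑ j, v j • pderiv j (f k))
            = ∑ j, applyAt ζ (Λs i) (v j • pderiv j (f k)) from map_sum (applyAtR ζ (Λs i)) _ _]
        refine Finset.sum_congr rfl fun j _ => ?_
        rw [applyAt_smul_right, eval_pderiv_applyPoly]
        ring
      rw [hEq, h0]
    have hDv0 : ∀ Λ ∈ dualSpace ζ Q, ∀ k, applyAt ζ Λ (Dv (f k)) = 0 := by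
      intro Λ hΛ
      rw [← hΛsp] at hΛ
      refine Submodule.span_induction ?_ ?_ ?_ ?_ hΛ
      · rintro x ⟨i, rfl⟩ k; exact hrow i k
      · intro k; exact applyAt_zeroL ζ _
      · intro x y hx hy hkx hky k; rw [applyAt_addL, hkx k, hky k, add_zero]
      · intro r x hx hkx k; rw [applyAt_smulL, hkx k, mul_zero]
    have hDvadd : ∀ a b, Dv (a + b) = Dv a + Dv b := by
      intro a b
      rw [hDv]
      simp only [map_add, smul_add]
      rw [Finset.sum_add_distrib]
    set W : Ideal (MvPolynomial (Fin n) ℝ) :=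
      { carrier := {g | g ∈ Kideal ζ Q ∧ Dv g ∈ Kideal ζ Q}
        zero_mem' := by
          refine ⟨zero_mem _, ?_⟩
          have h00 : Dv 0 = 0 := by simp [hDv]
          rw [h00]; exact zero_mem _
        add_mem' := by
          rintro a b ⟨ha1, ha2⟩ ⟨hb1, hb2⟩
          exact ⟨add_mem ha1 hb1, by rw [hDvadd]; exact add_mem ha2 hb2⟩
        smul_mem' := by
          rintro c g ⟨hg1, hg2⟩
          simp only [smul_eq_mul, Set.mem_setOf_eq]
          refine ⟨Ideal.mul_mem_left _ _ hg1, ?_⟩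
          have hsplit : Dv (c * g) = (∑ j, v j • (pderiv j c * g)) + c * Dv g := by
            rw [hDv]
            simp only [pderiv_mul, smul_add]
            rw [Finset.sum_add_distrib, Finset.mul_sum]
            congr 1
            exact Finset.sum_congr rfl fun j _ => (mul_smul_comm _ _ _).symm
          rw [hsplit]
          exact add_mem
            (Submodule.sum_mem _ fun j _ =>
              smul_mem_ideal _ _ (Ideal.mul_mem_left _ _ hg1))
            (Ideal.mul_mem_left _ _ hg2) } with hW
    have hmemW : ∀ g, g ∈ W ↔ (g ∈ Kideal ζ Q ∧ Dv g ∈ Kideal ζ Q) := fun g => Iff.rfl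
    have hIW : Ideal.span (Set.range f) ≤ W := by
      rw [Ideal.span_le]
      rintro x ⟨k, rfl⟩
      rw [SetLike.mem_coe, hmemW]
      constructor
      · rw [mem_Kideal_iff]
        intro Λ hΛ
        have hfQ : f k ∈ Q := by
          have hmem : f k ∈ Ideal.span (Set.range f) := Ideal.subset_span ⟨k, rfl⟩
          rw [hIdec] at hmem
          exact hmem.2
        exact (mem_dualSpace ζ Q Λ).1 hΛ _ hfQ
      · rw [mem_Kideal_iff]
        intro Λ hΛ
        exact hDv0 Λ hΛ k
    set Φ : ((Fin n →₀ ℕ) →₀ ℝ) →ₗ[ℝ] ((Fin n →₀ ℕ) →₀ ℝ) := ∑ j, v j • raiseL j with hΦ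
    have hΦapply : ∀ Λ g, applyAt ζ (Φ Λ) g = applyAt ζ Λ (Dv g) := by
      intro Λ g
      rw [hΦ, hDv, LinearMap.sum_apply]
      calc applyAt ζ (∑ j, (v j • raiseL j) Λ) g
          = ∑ j, applyAt ζ ((v j • raiseL j) Λ) g := map_sum (applyAtL ζ g) _ _
        _ = ∑ j, applyAt ζ Λ (v j • pderiv j g) := by
            refine Finset.sum_congr rfl fun j _ => ?_
            rw [LinearMap.smul_apply, applyAt_smulL, applyAt_raiseL, applyAt_smul_right]
        _ = applyAt ζ Λ (∑ j, v j • pderiv j g) := (map_sum (applyAtR ζ Λ) _ _).symm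
    have hΦD : ∀ Λ ∈ dualSpace ζ Q, Φ Λ ∈ dualSpace ζ Q := by
      intro Λ hΛ
      refine mem_dual_of_vanish_on_I S (fun P hP => (hS P hP).2) _ ?_
      intro g hg
      rw [hΦapply]
      have hgW : g ∈ W := hIW (by rw [hIdec]; exact hg)
      exact (mem_Kideal_iff ζ Q _).1 ((hmemW g).1 hgW).2 Λ hΛ
    obtain ⟨j0, hj0⟩ := Function.ne_iff.1 hv0
    have hL : (∑ j, C (v j) * X j : MvPolynomial (Fin n) ℝ) ≠ 0 := by
      intro h0
      have hco := congrArg (coeff (Finsupp.single j0 1)) h0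
      rw [coeff_sum] at hco
      have hterm : ∀ j : Fin n, coeff (Finsupp.single j0 1) (C (v j) * X j)
          = if j = j0 then v j else 0 := by
        intro j
        rw [coeff_C_mul, X, coeff_monomial]
        by_cases h : j = j0
        · subst h; simp
        · rw [if_neg (fun hh => h (Finsupp.single_left_injective one_ne_zero hh)), if_neg h,
            mul_zero]
      rw [Finset.sum_congr rfl fun j _ => hterm j, Finset.sum_ite_eq' Finset.univ j0 v,
        if_pos (Finset.mem_univ j0)] at hco
      simp at hco
      exact hj0 hco
    have hiotaΦ : ∀ Λ, iota (Φ Λ) = (∑ j, C (v j) * X j) * iota Λ := by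
      intro Λ
      rw [hΦ, LinearMap.sum_apply, map_sum, Finset.sum_mul]
      refine Finset.sum_congr rfl fun j _ => ?_
      rw [LinearMap.smul_apply, map_smul, iota_raiseL, smul_eq_C_mul, mul_assoc]
    have hΦinj : Function.Injective Φ := by
      intro a b hab
      apply iota_injective
      have h2 : iota (Φ a) = iota (Φ b) := congrArg iota hab
      rw [hiotaΦ, hiotaΦ] at h2
      exact mul_left_cancel₀ hL h2
    set Φres : dualSpace ζ Q →ₗ[ℝ] dualSpace ζ Q := Φ.restrict hΦD with hΦres
    have hresinj : Function.Injective Φres := by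
      intro x y hxy
      have hval : Φ x.1 = Φ y.1 := congrArg Subtype.val hxy
      exact Subtype.ext (hΦinj hval)
    have hsur := @LinearMap.surjective_of_injective ℝ (dualSpace ζ Q) _ _ _ hfd Φres hresinj
    have hδ : Finsupp.single (0 : Fin n →₀ ℕ) (1:ℝ) ∈ dualSpace ζ Q := by
      rw [mem_dualSpace]
      intro p hp
      rw [applyAt_single]
      have hD0 : Dfun ζ 0 p = eval ζ p := by
        unfold Dfun; rw [nderiv_zero_index]
      rw [hD0, eval_eq_zero_of_mem_max (hrad ▸ Ideal.le_radical hp), mul_zero]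
    obtain ⟨Λ', hΛ'⟩ := hsur ⟨_, hδ⟩
    have hval : Φ (Λ' : (Fin n →₀ ℕ) →₀ ℝ) = Finsupp.single (0 : Fin n →₀ ℕ) (1:ℝ) :=
      congrArg Subtype.val hΛ'
    have h1 : (Φ (Λ' : (Fin n →₀ ℕ) →₀ ℝ)) (0 : Fin n →₀ ℕ) = 1 := by
      rw [hval, Finsupp.single_eq_same]
    have h2 : (Φ (Λ' : (Fin n →₀ ℕ) →₀ ℝ)) (0 : Fin n →₀ ℕ) = 0 := by
      rw [hΦ, LinearMap.sum_apply, Finsupp.finset_sum_apply]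
      apply Finset.sum_eq_zero
      intro j _
      rw [LinearMap.smul_apply, Finsupp.smul_apply, raiseL_apply_zero, smul_zero]
    rw [h1] at h2
    exact one_ne_zero h2
  have hkerbot : LinearMap.ker M.mulVecLin = ⊥ :=
    LinearMap.ker_eq_bot'.2 fun m hm => hker m (by rwa [Matrix.mulVecLin_apply] at hm)
  have hrn := LinearMap.finrank_range_add_finrank_ker M.mulVecLin
  rw [hkerbot, finrank_bot, add_zero] at hrn
  show M.rank = n
  rw [Matrix.rank, hrn, Module.finrank_pi, Fintype.card_fin]
end
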